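/- For fixed a ∈ (0,1) and all x ∈ (0,1), a·log(x/a) + (1−a)·log((1−x)/(1−a)) ≤ −(1/2)·(x−a)². (Equivalently, the binary Kullback–Leibler divergence KL(a‖x) = a·log(a/x) + (1−a)·log((1−a)/(1−x)) satisfies KL(a‖x) ≥ (1/2)(x−a)².) -/

import Mathlib

open Real Set

private lemma g_hasDeriv (a : ℝ) (y : ℝ) (hy : y ∈ Set.Ioo (0:ℝ) 1) :
    HasDerivAt (fun t : ℝ => a * Real.log t + (1 - a) * Real.log (1 - t)
      + (1/2) * (t - a)^2) (a / y - (1 - a) / (1 - y) + (y - a)) y := by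
  have h1 : HasDerivAt (fun t : ℝ => a * Real.log t) (a / y) y := by
    simpa [div_eq_mul_inv, mul_comm] using (Real.hasDerivAt_log (ne_of_gt hy.1)).const_mul a
  have h2 : HasDerivAt (fun t : ℝ => (1 - t)) (-1) y := by
    simpa using (hasDerivAt_id y).const_sub 1
  have h3 : HasDerivAt (fun t : ℝ => (1 - a) * Real.log (1 - t))
      (-((1 - a) / (1 - y))) y := by
    have := ((Real.hasDerivAt_log (by linarith [hy.2] : (1:ℝ) - y ≠ 0)).comp y h2).const_mul (1 - a)
    refine this.congr_deriv ?_
    field_simp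
  have h4 : HasDerivAt (fun t : ℝ => (1/2 : ℝ) * (t - a)^2) (y - a) y := by
    have := (((hasDerivAt_id y).sub_const a).pow 2).const_mul (1/2 : ℝ)
    refine this.congr_deriv ?_
    simp [id]
  have := (h1.add h3).add h4
  refine this.congr_deriv ?_
  ring

/-- For `a, x ∈ (0,1)`:
`a·log(x/a) + (1−a)·log((1−x)/(1−a)) ≤ −(1/2)·(x−a)²`,
i.e. the binary KL divergence `KL(a‖x)` is at least `(1/2)(x−a)²`. -/
theorem binary_kl_quadratic_bound (a x : ℝ) (ha : a ∈ Set.Ioo (0:ℝ) 1)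
    (hx : x ∈ Set.Ioo (0:ℝ) 1) :
    a * Real.log (x / a) + (1 - a) * Real.log ((1 - x) / (1 - a)) ≤
      -(1 / 2) * (x - a) ^ 2 := by
  obtain ⟨ha0, ha1⟩ := ha
  obtain ⟨hx0, hx1⟩ := hx
  set g : ℝ → ℝ := fun t => a * Real.log t + (1 - a) * Real.log (1 - t)
      + (1/2) * (t - a)^2 with hg
  -- key: g x ≤ g a
  have hcont : ∀ s : Set ℝ, s ⊆ Set.Ioo (0:ℝ) 1 → ContinuousOn g s := by
    intro s hs
    apply ContinuousOn.add
    apply ContinuousOn.add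
    · exact (Real.continuousOn_log.mono (by intro t ht; exact ne_of_gt (hs ht).1)).const_smul a
        |>.congr (fun t ht => rfl)
    · exact ContinuousOn.mul continuousOn_const
        ((Real.continuousOn_log.comp (continuous_const.sub continuous_id).continuousOn)
          (fun t ht => by have := (hs ht).2; simp; linarith))
    · exact Continuous.continuousOn (by continuity)
  have hderiv_sign : ∀ y ∈ Set.Ioo (0:ℝ) 1, y ≥ a →
      a / y - (1 - a) / (1 - y) + (y - a) ≤ 0 := by
    intro y hy hya
    have h1 : (0:ℝ) < y := hy.1
    have h2 : y < 1 := hy.2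
    have key : a / y - (1 - a) / (1 - y) + (y - a)
        = (y - a) * (1 - 1 / (y * (1 - y))) := by
      have hyne : y ≠ 0 := ne_of_gt h1
      have hy1ne : (1:ℝ) - y ≠ 0 := by linarith
      field_simp
      ring
    rw [key]
    have hprod : y * (1 - y) ≤ 1/4 := by nlinarith [sq_nonneg (2*y - 1)]
    have hprodpos : 0 < y * (1 - y) := by nlinarith
    have : 1 / (y * (1 - y)) ≥ 4 := by
      rw [ge_iff_le, le_div_iff₀ hprodpos]; linarith
    nlinarith
  have hderiv_sign' : ∀ y ∈ Set.Ioo (0:ℝ) 1, y ≤ a →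
      0 ≤ a / y - (1 - a) / (1 - y) + (y - a) := by
    intro y hy hya
    have h1 : (0:ℝ) < y := hy.1
    have h2 : y < 1 := hy.2
    have key : a / y - (1 - a) / (1 - y) + (y - a)
        = (y - a) * (1 - 1 / (y * (1 - y))) := by
      have hyne : y ≠ 0 := ne_of_gt h1
      have hy1ne : (1:ℝ) - y ≠ 0 := by linarith
      field_simp
      ring
    rw [key]
    have hprod : y * (1 - y) ≤ 1/4 := by nlinarith [sq_nonneg (2*y - 1)]
    have hprodpos : 0 < y * (1 - y) := by nlinarith
    have : 1 / (y * (1 - y)) ≥ 4 := by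
      rw [ge_iff_le, le_div_iff₀ hprodpos]; linarith
    nlinarith
  have hkey : g x ≤ g a := by
    rcases le_total a x with hax | hax
    · -- g antitone on [a, x]
      have hsub : Set.Icc a x ⊆ Set.Ioo (0:ℝ) 1 := fun t ht =>
        ⟨lt_of_lt_of_le ha0 ht.1, lt_of_le_of_lt ht.2 hx1⟩
      have := antitoneOn_of_deriv_nonpos (convex_Icc a x) (hcont _ hsub)
        (fun y hy => by
          rw [interior_Icc] at hy
          exact (g_hasDeriv a y (hsub (Set.mem_Icc_of_Ioo hy))).differentiableAt.differentiableWithinAt)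
        (fun y hy => by
          rw [interior_Icc] at hy
          have hy' := hsub (Set.mem_Icc_of_Ioo hy)
          rw [(g_hasDeriv a y hy').deriv]
          exact hderiv_sign y hy' (le_of_lt hy.1))
      exact this (Set.left_mem_Icc.mpr hax) (Set.right_mem_Icc.mpr hax) hax
    · -- g monotone on [x, a]
      have hsub : Set.Icc x a ⊆ Set.Ioo (0:ℝ) 1 := fun t ht =>
        ⟨lt_of_lt_of_le hx0 ht.1, lt_of_le_of_lt ht.2 ha1⟩
      have := monotoneOn_of_deriv_nonneg (convex_Icc x a) (hcont _ hsub)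
        (fun y hy => by
          rw [interior_Icc] at hy
          exact (g_hasDeriv a y (hsub (Set.mem_Icc_of_Ioo hy))).differentiableAt.differentiableWithinAt)
        (fun y hy => by
          rw [interior_Icc] at hy
          have hy' := hsub (Set.mem_Icc_of_Ioo hy)
          rw [(g_hasDeriv a y hy').deriv]
          exact hderiv_sign' y hy' (le_of_lt hy.2))
      exact this (Set.left_mem_Icc.mpr hax) (Set.right_mem_Icc.mpr hax) hax
  -- unfold g and finish
  have hga : g a = a * Real.log a + (1 - a) * Real.log (1 - a) := by
    simp [hg]
  rw [Real.log_div (ne_of_gt hx0) (ne_of_gt ha0),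
      Real.log_div (by linarith : (1:ℝ) - x ≠ 0) (by linarith : (1:ℝ) - a ≠ 0)]
  have : g x = a * Real.log x + (1 - a) * Real.log (1 - x) + (1/2) * (x - a)^2 := rfl
  rw [hga, this] at hkey
  linarith
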